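/- If N ≥ 2, d ≥ max{63, 46N−79}, and n ≥ 7d+14, then the number of partitions of n into parts from T_{5,d} is at least the number of partitions of n into parts from S_d^N. -/

import Mathlib

/-- `rho A n` is the number of partitions of `n` all of whose parts lie in `A`. -/
noncomputable def rho (A : Set ℕ) (n : ℕ) : ℕ :=
  Nat.card {p : n.Partition // ∀ x ∈ p.parts, x ∈ A}

/-- `qpart a d n` is the number of partitions of `n` into parts that are all `≥ a`
and pairwise differ by at least `d` (so, in particular, are distinct when `d ≥ 1`). -/
noncomputable def qpart (a d n : ℕ) : ℕ :=
  Nat.card {p : n.Partition //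
    (∀ x ∈ p.parts, a ≤ x) ∧
    (∀ x ∈ p.parts, p.parts.count x ≤ 1) ∧
    (∀ x ∈ p.parts, ∀ y ∈ p.parts, x ≠ y → d ≤ max x y - min x y)}

/-- Positive integers congruent to `±a` modulo `m`, excluding `m - a`. -/
noncomputable def QminusSet (a m : ℕ) : Set ℕ :=
  {x | x % m = a % m ∨ x % m = (m - a) % m} \ {m - a}

/-- `Qminus a d n` counts partitions of `n` into parts `≡ ±a (mod d+3)`,
excluding the part `d+3-a`. -/
noncomputable def Qminus (a d n : ℕ) : ℕ := rho (QminusSet a (d + 3)) n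

/-- `Qmm a d n` counts partitions of `n` into parts `≡ ±a (mod d+3)`,
excluding both the parts `a` and `d+3-a`. -/
noncomputable def Qmm (a d n : ℕ) : ℕ := rho (QminusSet a (d + 3) \ {a}) n

/-- `Tset s d` is the set of naturals congruent to `1` or to `d + 2^j` for some
`1 ≤ j ≤ s - 1` modulo `2d`. -/
def Tset (s d : ℕ) : Set ℕ :=
  {y | y % (2 * d) = 1 % (2 * d) ∨
    ∃ j, 1 ≤ j ∧ j + 1 ≤ s ∧ y % (2 * d) = (d + 2 ^ j) % (2 * d)}

/-- `T5 d` : naturals congruent to `1, d+2, d+4, d+8` or `d+16` modulo `2d`. -/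
def T5 (d : ℕ) : Set ℕ := Tset 5 d

/-- `Sset d N` : naturals congruent to `±1` modulo `d-N+3`, excluding `d-N+2`. -/
def Sset (d N : ℕ) : Set ℕ :=
  {x | x % (d - N + 3) = 1 % (d - N + 3) ∨ x % (d - N + 3) = (d - N + 2) % (d - N + 3)}
    \ {d - N + 2}

/-- `xN d N i` is the `i`-th smallest element of `Sset d N` (1-indexed). -/
noncomputable def xN (d N i : ℕ) : ℕ := Nat.nth (· ∈ Sset d N) (i - 1)

/-- `yT d i` is the `i`-th smallest element of `T5 d` (1-indexed). -/
noncomputable def yT (d i : ℕ) : ℕ := Nat.nth (· ∈ T5 d) (i - 1)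

namespace Stmt11Aux

def Ef (d r : ℕ) : ℕ :=
  if r = 0 then 2 else if r = 1 then 4 else if r = 2 then 8 else if r = 3 then 16 else d + 1

def Yf (d j : ℕ) : ℕ := (2 * (j / 5) + 1) * d + Ef d (j % 5)

lemma Yf_lt_succ (d j : ℕ) (hd : 17 ≤ d) : Yf d j < Yf d (j + 1) := by
  have h5 : j % 5 = 0 ∨ j % 5 = 1 ∨ j % 5 = 2 ∨ j % 5 = 3 ∨ j % 5 = 4 := by omega
  rcases h5 with h | h | h | h | h
  · have hq : (j+1)/5 = j/5 := by omega
    have hr : (j+1) % 5 = 1 := by omega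
    simp only [Yf, Ef, hq, hr, h]
    norm_num
  · have hq : (j+1)/5 = j/5 := by omega
    have hr : (j+1) % 5 = 2 := by omega
    simp only [Yf, Ef, hq, hr, h]
    norm_num
  · have hq : (j+1)/5 = j/5 := by omega
    have hr : (j+1) % 5 = 3 := by omega
    simp only [Yf, Ef, hq, hr, h]
    norm_num
  · have hq : (j+1)/5 = j/5 := by omega
    have hr : (j+1) % 5 = 4 := by omega
    simp only [Yf, Ef, hq, hr, h]
    norm_num
    omega
  · have hq : (j+1)/5 = j/5 + 1 := by omega
    have hr : (j+1) % 5 = 0 := by omega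
    simp only [Yf, Ef, hq, hr, h]
    norm_num
    have e : (2 * (j/5 + 1) + 1) * d + 2 = (2 * (j/5) + 1) * d + (2*d + 2) := by ring
    rw [e]
    exact Nat.add_lt_add_left (by omega) _

lemma Yf_strictMono (d : ℕ) (hd : 17 ≤ d) : StrictMono (Yf d) :=
  strictMono_nat_of_lt_succ fun j => Yf_lt_succ d j hd

lemma Yf_shift (d j : ℕ) : Yf d (j + 10) = Yf d j + 4 * d := by
  have hq : (j+10)/5 = j/5 + 2 := by omega
  have hr : (j+10) % 5 = j % 5 := by omega
  simp only [Yf, hq, hr]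
  ring

lemma Yf_mem_T5 (d j : ℕ) (hd : 17 ≤ d) : Yf d j ∈ T5 d := by
  have h5 : j % 5 = 0 ∨ j % 5 = 1 ∨ j % 5 = 2 ∨ j % 5 = 3 ∨ j % 5 = 4 := by omega
  show _ % (2*d) = 1 % (2*d) ∨ _
  rcases h5 with h | h | h | h | h
  · refine Or.inr ⟨1, le_refl _, by norm_num, ?_⟩
    simp only [Yf, Ef, h]
    norm_num
    rw [show (2 * (j/5) + 1) * d + 2 = (d + 2) + (j/5) * (2*d) by ring,
      Nat.add_mul_mod_self_right]
  · refine Or.inr ⟨2, by norm_num, by norm_num, ?_⟩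
    simp only [Yf, Ef, h]
    norm_num
    rw [show (2 * (j/5) + 1) * d + 4 = (d + 4) + (j/5) * (2*d) by ring,
      Nat.add_mul_mod_self_right]
  · refine Or.inr ⟨3, by norm_num, by norm_num, ?_⟩
    simp only [Yf, Ef, h]
    norm_num
    rw [show (2 * (j/5) + 1) * d + 8 = (d + 8) + (j/5) * (2*d) by ring,
      Nat.add_mul_mod_self_right]
  · refine Or.inr ⟨4, by norm_num, by norm_num, ?_⟩
    simp only [Yf, Ef, h]
    norm_num
    rw [show (2 * (j/5) + 1) * d + 16 = (d + 16) + (j/5) * (2*d) by ring,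
      Nat.add_mul_mod_self_right]
  · refine Or.inl ?_
    simp only [Yf, Ef, h]
    norm_num
    rw [show (2 * (j/5) + 1) * d + (d + 1) = 1 + (j/5 + 1) * (2*d) by ring,
      Nat.add_mul_mod_self_right]

lemma Yf_tail (N d m : ℕ) (hN : 2 ≤ N) (hd : 63 ≤ d) (hdN : 46*N ≤ d + 79)
    (hm : m + N = d + 3) :
    ∀ k, 4 ≤ k → Yf d (2*k-2) + 3*N ≤ k*m + 5 ∧ Yf d (2*k-1) + 3*N ≤ k*m + 7 := by
  intro k
  induction k using Nat.strong_induction_on with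
  | _ k ih =>
    intro hk
    by_cases h8 : k ≤ 8
    · interval_cases k <;> refine ⟨?_, ?_⟩ <;> norm_num [Yf, Ef] <;> omega
    · obtain ⟨ih1, ih2⟩ := ih (k-5) (by omega) (by omega)
      have h45 : 4*d ≤ 5*m := by omega
      have e3 : k * m = (k-5)*m + 5*m := by
        have h : k - 5 + 5 = k := by omega
        calc k * m = (k-5+5) * m := by rw [h]
        _ = (k-5)*m + 5*m := by ring
      constructor
      · rw [show 2*k-2 = (2*(k-5) - 2) + 10 by omega, Yf_shift, e3]
        linarith
      · rw [show 2*k-1 = (2*(k-5) - 1) + 10 by omega, Yf_shift, e3]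
        linarith


def gidx (m v : ℕ) : ℕ :=
  if v % m = 1 then (if (v+1)/m ≤ 3 then 2*((v+1)/m) - 2 else 2*((v+1)/m) - 1)
  else (if (v+1)/m ≤ 3 then 2*((v+1)/m) - 3 else 2*((v+1)/m) - 2)

def gm (d m v : ℕ) : ℕ := Yf d (gidx m v)

/-- Parse an element of `Sset` other than `1` and `m+1`. -/
lemma parse (N d m v : ℕ) (hN : 2 ≤ N) (hd : 63 ≤ d) (hdN : 46*N ≤ d + 79)
    (hm : m + N = d + 3) (hv : v ∈ Sset d N) (h1 : v ≠ 1) (hm1 : v ≠ m + 1) :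
    ∃ k, 2 ≤ k ∧ (v+1)/m = k ∧
      ((v % m = 1 ∧ v = m*k + 1) ∨ (v % m = m - 1 ∧ v + 1 = m*k)) := by
  have hm62 : 62 ≤ m := by omega
  have e3 : d - N + 3 = m := by omega
  have e2 : d - N + 2 = m - 1 := by omega
  obtain ⟨hmod, hne⟩ := hv
  rw [e3, e2] at hmod
  simp only [Set.mem_setOf_eq] at hmod
  simp only [Set.mem_singleton_iff, e2] at hne
  have h1m : (1:ℕ) % m = 1 := Nat.mod_eq_of_lt (by omega)
  have hm1m : (m-1) % m = m - 1 := Nat.mod_eq_of_lt (by omega)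
  rw [h1m, hm1m] at hmod
  obtain ⟨q, hq⟩ : ∃ q, v / m = q := ⟨_, rfl⟩
  have hdm : m * q + v % m = v := by rw [← hq]; exact Nat.div_add_mod v m
  rcases hmod with h | h
  · have hv' : v = m * q + 1 := by omega
    have hq2 : 2 ≤ q := by
      rcases (by omega : q = 0 ∨ q = 1 ∨ 2 ≤ q) with rfl | rfl | h2
      · simp at hv'; exact absurd hv' h1
      · simp at hv'; omega
      · exact h2
    have hkdiv : (v+1)/m = q := by
      rw [hv', show m*q+1+1 = m*q+2 by omega, Nat.mul_add_div (by omega),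
        Nat.div_eq_of_lt (by omega : 2 < m)]
      omega
    exact ⟨q, hq2, hkdiv, Or.inl ⟨h, hv'⟩⟩
  · have hv' : v = m * q + (m - 1) := by omega
    have hq1 : 1 ≤ q := by
      rcases (by omega : q = 0 ∨ 1 ≤ q) with rfl | h2
      · simp at hv'; exact absurd hv' hne
      · exact h2
    have hvp : v + 1 = m * (q + 1) := by
      have e : m * (q+1) = m * q + m := by ring
      omega
    have hkdiv : (v+1)/m = q + 1 := by
      rw [hvp, Nat.mul_div_cancel_left _ (by omega : 0 < m)]
    exact ⟨q + 1, by omega, hkdiv, Or.inr ⟨h, hvp⟩⟩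

lemma gidx_plus (m v k : ℕ) (h : v % m = 1) (hk : (v+1)/m = k) :
    gidx m v = if k ≤ 3 then 2*k - 2 else 2*k - 1 := by
  simp [gidx, h, hk]

lemma gidx_minus (m v k : ℕ) (h : v % m = m - 1) (hm62 : 62 ≤ m) (hk : (v+1)/m = k) :
    gidx m v = if k ≤ 3 then 2*k - 3 else 2*k - 2 := by
  simp only [gidx, h, hk]
  rw [if_neg (by omega)]

/-- The key pointwise bound and index facts. -/
lemma gm_le (N d m v : ℕ) (hN : 2 ≤ N) (hd : 63 ≤ d) (hdN : 46*N ≤ d + 79)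
    (hm : m + N = d + 3) (hv : v ∈ Sset d N) (h1 : v ≠ 1) (hm1 : v ≠ m + 1) :
    gm d m v + 3*N ≤ v + 6 := by
  have hm62 : 62 ≤ m := by omega
  obtain ⟨k, hk2, hkdiv, hcase⟩ := parse N d m v hN hd hdN hm hv h1 hm1
  rcases hcase with ⟨hmod, hval⟩ | ⟨hmod, hval⟩
  · rw [gm, gidx_plus m v k hmod hkdiv]
    rcases (by omega : k = 2 ∨ k = 3 ∨ 4 ≤ k) with rfl | rfl | hk4
    · norm_num [Yf, Ef]; omega
    · norm_num [Yf, Ef]; omega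
    · rw [if_neg (by omega)]
      have h2 := (Yf_tail N d m hN hd hdN hm k hk4).2
      have hcomm : k*m = m*k := Nat.mul_comm k m
      omega
  · rw [gm, gidx_minus m v k hmod hm62 hkdiv]
    rcases (by omega : k = 2 ∨ k = 3 ∨ 4 ≤ k) with rfl | rfl | hk4
    · norm_num [Yf, Ef]; omega
    · norm_num [Yf, Ef]; omega
    · rw [if_neg (by omega)]
      have h2 := (Yf_tail N d m hN hd hdN hm k hk4).1
      have hcomm : k*m = m*k := Nat.mul_comm k m
      omega

lemma gidx_ne (N d m v : ℕ) (hN : 2 ≤ N) (hd : 63 ≤ d) (hdN : 46*N ≤ d + 79)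
    (hm : m + N = d + 3) (hv : v ∈ Sset d N) (h1 : v ≠ 1) (hm1 : v ≠ m + 1) :
    gidx m v ≠ 0 ∧ gidx m v ≠ 5 := by
  have hm62 : 62 ≤ m := by omega
  obtain ⟨k, hk2, hkdiv, hcase⟩ := parse N d m v hN hd hdN hm hv h1 hm1
  rcases hcase with ⟨hmod, hval⟩ | ⟨hmod, hval⟩
  · rw [gidx_plus m v k hmod hkdiv]
    split_ifs <;> omega
  · rw [gidx_minus m v k hmod hm62 hkdiv]
    split_ifs <;> omega

lemma gm_inj (N d m u v : ℕ) (hN : 2 ≤ N) (hd : 63 ≤ d) (hdN : 46*N ≤ d + 79)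
    (hm : m + N = d + 3)
    (hu : u ∈ Sset d N) (hu1 : u ≠ 1) (hum1 : u ≠ m + 1)
    (hv : v ∈ Sset d N) (hv1 : v ≠ 1) (hvm1 : v ≠ m + 1)
    (h : gm d m u = gm d m v) : u = v := by
  have hm62 : 62 ≤ m := by omega
  have hidx : gidx m u = gidx m v :=
    (Yf_strictMono d (by omega)).injective h
  obtain ⟨a, ha2, hadiv, hacase⟩ := parse N d m u hN hd hdN hm hu hu1 hum1
  obtain ⟨b, hb2, hbdiv, hbcase⟩ := parse N d m v hN hd hdN hm hv hv1 hvm1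
  rcases hacase with ⟨hmoda, hvala⟩ | ⟨hmoda, hvala⟩ <;>
    rcases hbcase with ⟨hmodb, hvalb⟩ | ⟨hmodb, hvalb⟩
  · rw [gidx_plus m u a hmoda hadiv, gidx_plus m v b hmodb hbdiv] at hidx
    have hab : a = b := by split_ifs at hidx <;> omega
    subst hab; omega
  · rw [gidx_plus m u a hmoda hadiv, gidx_minus m v b hmodb hm62 hbdiv] at hidx
    exfalso; split_ifs at hidx <;> omega
  · rw [gidx_minus m u a hmoda hm62 hadiv, gidx_plus m v b hmodb hbdiv] at hidx
    exfalso; split_ifs at hidx <;> omega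
  · rw [gidx_minus m u a hmoda hm62 hadiv, gidx_minus m v b hmodb hm62 hbdiv] at hidx
    have hab : a = b := by split_ifs at hidx <;> omega
    subst hab; omega


lemma cost_bound (N d m : ℕ) (hN : 2 ≤ N) (hd : 63 ≤ d) (hdN : 46*N ≤ d + 79)
    (hm : m + N = d + 3) : ∀ j : ℕ,
    ((j % 4)*(d+2) + (j / 4)*(3*d+2) + 6 ≤ j*(m+1) + 3*N) ∧
    (4 ≤ j → (j % 4)*(d+2) + (j / 4)*(3*d+2) ≤ j*(m+1)) := by
  intro j
  induction j using Nat.strong_induction_on with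
  | _ j ih =>
    by_cases h8 : j ≤ 7
    · interval_cases j <;> exact ⟨by omega, fun _ => by omega⟩
    · have IH := ih (j - 4) (by omega)
      have e1 : j % 4 = (j-4) % 4 := by omega
      have e3 : j * (m+1) = (j-4)*(m+1) + 4*(m+1) := by
        have h : j - 4 + 4 = j := by omega
        calc j*(m+1) = (j-4+4)*(m+1) := by rw [h]
        _ = (j-4)*(m+1) + 4*(m+1) := by ring
      have e4 : (j/4)*(3*d+2) = ((j-4)/4)*(3*d+2) + (3*d+2) := by
        have e2 : j / 4 = (j-4)/4 + 1 := by omega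
        rw [e2]; ring
      have h4 : 3*d+2 ≤ 4*(m+1) := by omega
      constructor
      · have hI := IH.1
        rw [e1, e4, e3]
        omega
      · intro _
        have hI := IH.2 (by omega)
        rw [e1, e4, e3]
        omega

lemma sum_map_le (s : Multiset ℕ) (f : ℕ → ℕ) (h : ∀ v ∈ s, f v ≤ v) :
    (s.map f).sum ≤ s.sum := by
  have := Multiset.sum_map_le_sum_map f id h
  simpa using this

lemma map_injOn (f : ℕ → ℕ) (P : ℕ → Prop)
    (hf : ∀ a, P a → ∀ b, P b → f a = f b → a = b) :
    ∀ (s : Multiset ℕ), (∀ x ∈ s, P x) → ∀ (t : Multiset ℕ), (∀ x ∈ t, P x) →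
      s.map f = t.map f → s = t := by
  intro s
  induction s using Multiset.induction_on with
  | empty =>
    intro _ t ht h
    rw [Multiset.map_zero] at h
    exact (Multiset.map_eq_zero.mp h.symm).symm
  | cons a s ihs' =>
    intro hs t ht h
    have hfa : f a ∈ t.map f := by rw [← h]; simp
    obtain ⟨b, hbt, hfb⟩ := Multiset.mem_map.mp hfa
    have hab : a = b := hf a (hs a (by simp)) b (ht b hbt) hfb.symm
    subst hab
    obtain ⟨t', rfl⟩ := Multiset.exists_cons_of_mem hbt
    rw [Multiset.map_cons, Multiset.map_cons] at h
    have h' := (Multiset.cons_inj_right _).mp h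
    have := ihs' (fun x hx => hs x (by simp [hx])) t' (fun x hx => ht x (by simp [hx])) h'
    rw [this]

def coreM (m : ℕ) (s : Multiset ℕ) : Multiset ℕ :=
  s.filter (fun v => ¬(v = 1 ∨ v = m+1))

def DM (d m : ℕ) (s : Multiset ℕ) : Multiset ℕ :=
  Multiset.replicate (s.count (m+1) % 4) (d+2) +
  Multiset.replicate (s.count (m+1) / 4) (3*d+2) +
  (coreM m s).map (gm d m)

lemma Yf_zero (d : ℕ) : Yf d 0 = d + 2 := by norm_num [Yf, Ef]

lemma Yf_five (d : ℕ) : Yf d 5 = 3*d + 2 := by norm_num [Yf, Ef]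

lemma Yf_ge (d j : ℕ) (hd : 1 ≤ d) : d + 2 ≤ Yf d j := by
  have h1 : d ≤ (2*(j/5)+1)*d := Nat.le_mul_of_pos_left d (by omega)
  have h2 : 2 ≤ Ef d (j % 5) := by unfold Ef; split_ifs <;> omega
  unfold Yf; omega

lemma coreM_mem (m : ℕ) (s : Multiset ℕ) (v : ℕ) (hv : v ∈ coreM m s) :
    v ∈ s ∧ v ≠ 1 ∧ v ≠ m + 1 := by
  rw [coreM, Multiset.mem_filter] at hv
  tauto

lemma recon (m : ℕ) (hm62 : 62 ≤ m) (s : Multiset ℕ) :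
    s.filter (fun v => ¬ v = 1) =
      Multiset.replicate (s.count (m+1)) (m+1) + coreM m s := by
  ext a
  simp only [Multiset.count_filter, Multiset.count_add, Multiset.count_replicate, coreM]
  by_cases h1 : a = 1
  · subst h1
    rw [if_neg (by simp), if_neg (by omega : ¬(m+1 = 1)), if_neg (by simp)]
  · by_cases h2 : a = m + 1
    · subst h2
      rw [if_pos (by simp [show (m:ℕ)+1 ≠ 1 by omega, show m ≠ 0 by omega]), if_pos rfl,
        if_neg (by simp)]
      omega
    · rw [if_pos (by simp [h1]), if_neg (by omega : ¬(m+1 = a)), if_pos (by simp [h1, h2])]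
      omega

lemma DM_mem_T5 (N d m : ℕ) (hd : 63 ≤ d) (s : Multiset ℕ) :
    ∀ y ∈ DM d m s, y ∈ T5 d := by
  intro y hy
  simp only [DM, Multiset.mem_add, Multiset.mem_replicate, Multiset.mem_map] at hy
  rcases hy with (⟨_, rfl⟩ | ⟨_, rfl⟩) | ⟨v, _, rfl⟩
  · rw [← Yf_zero d]; exact Yf_mem_T5 d 0 (by omega)
  · rw [← Yf_five d]; exact Yf_mem_T5 d 5 (by omega)
  · exact Yf_mem_T5 d _ (by omega)

lemma DM_ge (d m : ℕ) (hd : 1 ≤ d) (s : Multiset ℕ) :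
    ∀ y ∈ DM d m s, d + 2 ≤ y := by
  intro y hy
  simp only [DM, Multiset.mem_add, Multiset.mem_replicate, Multiset.mem_map] at hy
  rcases hy with (⟨_, rfl⟩ | ⟨_, rfl⟩) | ⟨v, _, rfl⟩
  · exact le_rfl
  · omega
  · exact Yf_ge d _ hd

lemma DM_sum_eq (d m : ℕ) (s : Multiset ℕ) :
    (DM d m s).sum = (s.count (m+1) % 4) * (d+2) + (s.count (m+1) / 4) * (3*d+2)
      + ((coreM m s).map (gm d m)).sum := by
  simp [DM, Multiset.sum_replicate, smul_eq_mul]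

lemma key_split (m : ℕ) (s : Multiset ℕ) :
    s.count (m+1) * (m+1) + (coreM m s).sum ≤ s.sum := by
  have hC_le : coreM m s ≤ s.filter (fun v => ¬ v = m+1) := by
    apply Multiset.monotone_filter_right
    intro b hb
    tauto
  have h1 : s.filter (fun v => v = m+1) + coreM m s ≤ s := by
    calc s.filter (fun v => v = m+1) + coreM m s
        ≤ s.filter (fun v => v = m+1) + s.filter (fun v => ¬ v = m+1) :=
          add_le_add le_rfl hC_le
    _ = s := Multiset.filter_add_not _ s
  obtain ⟨u, hu⟩ := Multiset.le_iff_exists_add.mp h1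
  have h2 : (Multiset.filter (fun v => v = m + 1) s + coreM m s).sum ≤ s.sum := by
    calc (Multiset.filter (fun v => v = m + 1) s + coreM m s).sum
        ≤ (Multiset.filter (fun v => v = m + 1) s + coreM m s).sum + u.sum :=
          Nat.le_add_right _ _
    _ = s.sum := by conv_rhs => rw [hu, Multiset.sum_add]
  rw [Multiset.sum_add, Multiset.filter_eq', Multiset.sum_replicate, smul_eq_mul] at h2
  exact h2

lemma gm_ne_res (N d m v : ℕ) (hN : 2 ≤ N) (hd : 63 ≤ d) (hdN : 46*N ≤ d + 79)
    (hm : m + N = d + 3) (hv : v ∈ Sset d N) (h1 : v ≠ 1) (hm1 : v ≠ m + 1) :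
    gm d m v ≠ d + 2 ∧ gm d m v ≠ 3*d + 2 := by
  obtain ⟨hi0, hi5⟩ := gidx_ne N d m v hN hd hdN hm hv h1 hm1
  constructor
  · rw [gm, ← Yf_zero d]
    intro hcon
    exact hi0 ((Yf_strictMono d (by omega)).injective hcon)
  · rw [gm, ← Yf_five d]
    intro hcon
    exact hi5 ((Yf_strictMono d (by omega)).injective hcon)

lemma DM_sum_le (N d m n : ℕ) (hN : 2 ≤ N) (hd : 63 ≤ d) (hdN : 46*N ≤ d + 79)
    (hm : m + N = d + 3) (hn : 7*d + 14 ≤ n) (s : Multiset ℕ)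
    (hs : ∀ x ∈ s, x ∈ Sset d N) (hsum : s.sum ≤ n) :
    (DM d m s).sum ≤ n := by
  have hkey := key_split m s
  have hcore : ∀ v ∈ coreM m s, v ∈ Sset d N ∧ v ≠ 1 ∧ v ≠ m+1 := fun v hv =>
    ⟨hs v (coreM_mem m s v hv).1, (coreM_mem m s v hv).2.1, (coreM_mem m s v hv).2.2⟩
  have hgle : ∀ v ∈ coreM m s, gm d m v ≤ v := by
    intro v hv
    have h := gm_le N d m v hN hd hdN hm (hcore v hv).1 (hcore v hv).2.1 (hcore v hv).2.2
    omega
  have hcost := cost_bound N d m hN hd hdN hm (s.count (m+1))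
  rw [DM_sum_eq]
  rcases eq_or_ne (coreM m s) 0 with hC0 | hCne
  · rw [hC0]
    simp only [Multiset.map_zero, Multiset.sum_zero, add_zero]
    rw [hC0] at hkey
    simp only [Multiset.sum_zero, add_zero] at hkey
    rcases le_or_gt (s.count (m+1)) 3 with h3 | h4
    · have e1 : s.count (m+1) % 4 = s.count (m+1) := by omega
      have e2 : s.count (m+1) / 4 = 0 := by omega
      rw [e1, e2]
      have h5 : s.count (m+1) * (d+2) ≤ 3 * (d+2) := Nat.mul_le_mul_right _ h3
      omega
    · have h6 := hcost.2 (by omega)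
      omega
  · obtain ⟨v0, hv0⟩ := Multiset.exists_mem_of_ne_zero hCne
    obtain ⟨C', hC'⟩ := Multiset.exists_cons_of_mem hv0
    have h0 := gm_le N d m v0 hN hd hdN hm (hcore v0 hv0).1 (hcore v0 hv0).2.1
      (hcore v0 hv0).2.2
    have hrest : (C'.map (gm d m)).sum ≤ C'.sum := by
      apply sum_map_le
      intro v hv
      exact hgle v (by rw [hC']; simp [hv])
    have hms : ((coreM m s).map (gm d m)).sum = gm d m v0 + (C'.map (gm d m)).sum := by
      rw [hC', Multiset.map_cons, Multiset.sum_cons]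
    have hcs : (coreM m s).sum = v0 + C'.sum := by rw [hC', Multiset.sum_cons]
    have h1 := hcost.1
    omega

lemma DM_count_d2 (N d m : ℕ) (hN : 2 ≤ N) (hd : 63 ≤ d) (hdN : 46*N ≤ d + 79)
    (hm : m + N = d + 3) (s : Multiset ℕ) (hs : ∀ x ∈ s, x ∈ Sset d N) :
    (DM d m s).count (d+2) = s.count (m+1) % 4 := by
  rw [DM, Multiset.count_add, Multiset.count_add, Multiset.count_replicate,
    Multiset.count_replicate, if_pos rfl, if_neg (by omega : ¬(3*d+2 = d+2))]
  have hmap : ((coreM m s).map (gm d m)).count (d+2) = 0 := by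
    rw [Multiset.count_eq_zero]
    intro hmem
    obtain ⟨v, hv, hgv⟩ := Multiset.mem_map.mp hmem
    have hc := coreM_mem m s v hv
    exact (gm_ne_res N d m v hN hd hdN hm (hs v hc.1) hc.2.1 hc.2.2).1 hgv
  omega

lemma DM_count_3d2 (N d m : ℕ) (hN : 2 ≤ N) (hd : 63 ≤ d) (hdN : 46*N ≤ d + 79)
    (hm : m + N = d + 3) (s : Multiset ℕ) (hs : ∀ x ∈ s, x ∈ Sset d N) :
    (DM d m s).count (3*d+2) = s.count (m+1) / 4 := by
  rw [DM, Multiset.count_add, Multiset.count_add, Multiset.count_replicate,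
    Multiset.count_replicate, if_pos rfl, if_neg (by omega : ¬(d+2 = 3*d+2))]
  have hmap : ((coreM m s).map (gm d m)).count (3*d+2) = 0 := by
    rw [Multiset.count_eq_zero]
    intro hmem
    obtain ⟨v, hv, hgv⟩ := Multiset.mem_map.mp hmem
    have hc := coreM_mem m s v hv
    exact (gm_ne_res N d m v hN hd hdN hm (hs v hc.1) hc.2.1 hc.2.2).2 hgv
  omega

lemma DM_filter (N d m : ℕ) (hN : 2 ≤ N) (hd : 63 ≤ d) (hdN : 46*N ≤ d + 79)
    (hm : m + N = d + 3) (s : Multiset ℕ) (hs : ∀ x ∈ s, x ∈ Sset d N) :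
    (DM d m s).filter (fun y => ¬(y = d+2 ∨ y = 3*d+2)) = (coreM m s).map (gm d m) := by
  rw [DM, Multiset.filter_add, Multiset.filter_add]
  have h1 : (Multiset.replicate (s.count (m+1) % 4) (d+2)).filter
      (fun y => ¬(y = d+2 ∨ y = 3*d+2)) = 0 := by
    rw [Multiset.filter_eq_nil]
    intro a ha
    rw [Multiset.eq_of_mem_replicate ha]
    simp
  have h2 : (Multiset.replicate (s.count (m+1) / 4) (3*d+2)).filter
      (fun y => ¬(y = d+2 ∨ y = 3*d+2)) = 0 := by
    rw [Multiset.filter_eq_nil]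
    intro a ha
    rw [Multiset.eq_of_mem_replicate ha]
    simp
  have h3 : ((coreM m s).map (gm d m)).filter
      (fun y => ¬(y = d+2 ∨ y = 3*d+2)) = (coreM m s).map (gm d m) := by
    rw [Multiset.filter_eq_self]
    intro y hy
    obtain ⟨v, hv, rfl⟩ := Multiset.mem_map.mp hy
    have hc := coreM_mem m s v hv
    have := gm_ne_res N d m v hN hd hdN hm (hs v hc.1) hc.2.1 hc.2.2
    tauto
  rw [h1, h2, h3, zero_add, zero_add]

lemma DM_inj (N d m : ℕ) (hN : 2 ≤ N) (hd : 63 ≤ d) (hdN : 46*N ≤ d + 79)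
    (hm : m + N = d + 3) (s t : Multiset ℕ) (hs : ∀ x ∈ s, x ∈ Sset d N)
    (ht : ∀ x ∈ t, x ∈ Sset d N) (h : DM d m s = DM d m t) :
    s.count (m+1) = t.count (m+1) ∧ coreM m s = coreM m t := by
  have h2 := congrArg (Multiset.count (d+2)) h
  rw [DM_count_d2 N d m hN hd hdN hm s hs, DM_count_d2 N d m hN hd hdN hm t ht] at h2
  have h3 := congrArg (Multiset.count (3*d+2)) h
  rw [DM_count_3d2 N d m hN hd hdN hm s hs, DM_count_3d2 N d m hN hd hdN hm t ht] at h3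
  have hj : s.count (m+1) = t.count (m+1) := by omega
  have h4 := congrArg (Multiset.filter (fun y => ¬(y = d+2 ∨ y = 3*d+2))) h
  rw [DM_filter N d m hN hd hdN hm s hs, DM_filter N d m hN hd hdN hm t ht] at h4
  refine ⟨hj, map_injOn (gm d m) (fun v => v ∈ Sset d N ∧ v ≠ 1 ∧ v ≠ m+1)
    (fun a ha b hb hab => gm_inj N d m a b hN hd hdN hm ha.1 ha.2.1 ha.2.2
      hb.1 hb.2.1 hb.2.2 hab) _ ?_ _ ?_ h4⟩
  · intro x hx
    have hc := coreM_mem m s x hx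
    exact ⟨hs x hc.1, hc.2.1, hc.2.2⟩
  · intro x hx
    have hc := coreM_mem m t x hx
    exact ⟨ht x hc.1, hc.2.1, hc.2.2⟩

lemma parts_eq_of_filter (s t : Multiset ℕ) (hsum : s.sum = t.sum)
    (h : s.filter (fun v => ¬ v = 1) = t.filter (fun v => ¬ v = 1)) : s = t := by
  have es : s = Multiset.replicate (s.count 1) 1 + s.filter (fun v => ¬ v = 1) := by
    rw [← Multiset.filter_eq' s 1]
    exact (Multiset.filter_add_not _ s).symm
  have et : t = Multiset.replicate (t.count 1) 1 + t.filter (fun v => ¬ v = 1) := by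
    rw [← Multiset.filter_eq' t 1]
    exact (Multiset.filter_add_not _ t).symm
  have hsum_s : s.sum = s.count 1 * 1 + (s.filter (fun v => ¬ v = 1)).sum := by
    conv_lhs => rw [es]
    rw [Multiset.sum_add, Multiset.sum_replicate, smul_eq_mul]
  have hsum_t : t.sum = t.count 1 * 1 + (t.filter (fun v => ¬ v = 1)).sum := by
    conv_lhs => rw [et]
    rw [Multiset.sum_add, Multiset.sum_replicate, smul_eq_mul]
  have hfs : (s.filter (fun v => ¬ v = 1)).sum = (t.filter (fun v => ¬ v = 1)).sum := by
    rw [h]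
  have hc : s.count 1 = t.count 1 := by omega
  rw [es, et, hc, h]

end Stmt11Aux


theorem stmt11 (N d n : ℕ) (hN : 2 ≤ N) (hd : max 63 (46 * N - 79) ≤ d)
    (hn : 7 * d + 14 ≤ n) :
    rho (Sset d N) n ≤ rho (T5 d) n := by
  have hd63 : 63 ≤ d := le_trans (le_max_left _ _) hd
  have hdN : 46 * N ≤ d + 79 := by
    have h := le_trans (le_max_right 63 (46*N - 79)) hd
    omega
  set m := d - N + 3 with hmdef
  have hm : m + N = d + 3 := by omega
  have hm62 : 62 ≤ m := by omega
  unfold rho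
  apply Nat.card_le_card_of_injective
    (f := fun pp : {p : n.Partition // ∀ x ∈ p.parts, x ∈ Sset d N} =>
      (⟨⟨Stmt11Aux.DM d m pp.1.parts +
          Multiset.replicate (n - (Stmt11Aux.DM d m pp.1.parts).sum) 1,
        by
          intro i hi
          rcases Multiset.mem_add.mp hi with h' | h'
          · have := Stmt11Aux.DM_ge d m (by omega) pp.1.parts i h'
            omega
          · rw [Multiset.eq_of_mem_replicate h']
            omega,
        by
          have hle : (Stmt11Aux.DM d m pp.1.parts).sum ≤ n :=
            Stmt11Aux.DM_sum_le N d m n hN hd63 hdN hm hn pp.1.parts pp.2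
              (le_of_eq pp.1.parts_sum)
          rw [Multiset.sum_add, Multiset.sum_replicate, smul_eq_mul]
          omega⟩,
        by
          intro x hx
          rcases Multiset.mem_add.mp hx with h' | h'
          · exact Stmt11Aux.DM_mem_T5 N d m hd63 pp.1.parts x h'
          · rw [Multiset.eq_of_mem_replicate h']
            exact Or.inl rfl⟩ : {p : n.Partition // ∀ x ∈ p.parts, x ∈ T5 d}))
  intro p1 p2 hF
  have hparts := congrArg
    (fun q : {p : n.Partition // ∀ x ∈ p.parts, x ∈ T5 d} => q.1.parts) hF
  simp only at hparts
  have extract : ∀ (p : n.Partition), (∀ x ∈ p.parts, x ∈ Sset d N) →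
      (Stmt11Aux.DM d m p.parts +
        Multiset.replicate (n - (Stmt11Aux.DM d m p.parts).sum) 1).filter
          (fun v => ¬ v = 1) = Stmt11Aux.DM d m p.parts := by
    intro p hp
    rw [Multiset.filter_add]
    have hA : (Stmt11Aux.DM d m p.parts).filter (fun v => ¬ v = 1)
        = Stmt11Aux.DM d m p.parts := by
      rw [Multiset.filter_eq_self]
      intro a ha
      have := Stmt11Aux.DM_ge d m (by omega) p.parts a ha
      omega
    have hB : (Multiset.replicate (n - (Stmt11Aux.DM d m p.parts).sum) 1).filter
        (fun v => ¬ v = 1) = 0 := by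
      rw [Multiset.filter_eq_nil]
      intro a ha
      rw [Multiset.eq_of_mem_replicate ha]
      simp
    rw [hA, hB, add_zero]
  have hD : Stmt11Aux.DM d m p1.1.parts = Stmt11Aux.DM d m p2.1.parts := by
    have h := congrArg (Multiset.filter (fun v => ¬ v = 1)) hparts
    rwa [extract p1.1 p1.2, extract p2.1 p2.2] at h
  obtain ⟨hj, hcore⟩ := Stmt11Aux.DM_inj N d m hN hd63 hdN hm _ _ p1.2 p2.2 hD
  have hfil : p1.1.parts.filter (fun v => ¬ v = 1)
      = p2.1.parts.filter (fun v => ¬ v = 1) := by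
    rw [Stmt11Aux.recon m hm62, Stmt11Aux.recon m hm62, hj, hcore]
  have hps : p1.1.parts = p2.1.parts :=
    Stmt11Aux.parts_eq_of_filter _ _ (by rw [p1.1.parts_sum, p2.1.parts_sum]) hfil
  exact Subtype.ext (Nat.Partition.ext hps)
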